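/- For (a,b), (α,β) in the upper half plane, the quantity (1/2)·tr(A^{-1} B)·√(det A / det B)·√(det B), where A = T_{a,b}^T T_{a,b} and B = T_{α,β}^T T_{α,β} with T_{a,b} the linear map sending (1,0) ↦ (1/√b)(1,0) and (0,1) ↦ (1/√b)(a,b), equals 1 + ((a-α)² + (b-β)²)/(2bβ). -/

import Mathlib

open Matrix

/-- The matrix of the linear map `T_{a,b} : ℝ² → ℝ²` sending `(1,0) ↦ (1/√b)(1,0)` and
`(0,1) ↦ (1/√b)(a,b)`. -/
noncomputable def Tmat (a b : ℝ) : Matrix (Fin 2) (Fin 2) ℝ :=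
  (1 / Real.sqrt b) • !![1, a; 0, b]

lemma key (a b : ℝ) (hb : 0 < b) :
    (Tmat a b)ᵀ * Tmat a b = !![1/b, a/b; a/b, (a^2+b^2)/b] := by
  have h : (1 / Real.sqrt b) * (1 / Real.sqrt b) = 1 / b := by
    rw [div_mul_div_comm, one_mul, Real.mul_self_sqrt hb.le]
  have hs : Real.sqrt b * Real.sqrt b = b := Real.mul_self_sqrt hb.le
  have hs0 : Real.sqrt b ≠ 0 := (Real.sqrt_pos.2 hb).ne'
  ext i j
  fin_cases i <;> fin_cases j <;>
    simp [Tmat, Matrix.mul_apply, Fin.sum_univ_two, Matrix.transpose_apply,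
      Matrix.vecHead, Matrix.vecTail] <;>
    (first | (field_simp; nlinarith [hs]) | (field_simp; rw [Real.sq_sqrt hb.le]; ring) | field_simp)

lemma keydet (a b : ℝ) (hb : 0 < b) : ((Tmat a b)ᵀ * Tmat a b).det = 1 := by
  rw [key a b hb, det_fin_two_of]
  field_simp; ring

/-- With `A = T_{a,b}ᵀ T_{a,b}` and `B = T_{α,β}ᵀ T_{α,β}`, the Dirichlet energy of the
identity map between the corresponding flat unit-area tori,
`(1/2)·tr(A⁻¹B)·√(det A/det B)·√(det B)`, equals `1 + ((a-α)² + (b-β)²)/(2bβ)`. -/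
theorem energy_identity_formula (a b α β : ℝ) (hb : 0 < b) (hβ : 0 < β) :
    (1 / 2) * (((Tmat a b)ᵀ * Tmat a b)⁻¹ * ((Tmat α β)ᵀ * Tmat α β)).trace *
        Real.sqrt (((Tmat a b)ᵀ * Tmat a b).det / ((Tmat α β)ᵀ * Tmat α β).det) *
        Real.sqrt ((Tmat α β)ᵀ * Tmat α β).det =
      1 + ((a - α) ^ 2 + (b - β) ^ 2) / (2 * b * β) := by
  have hinv : ((Tmat a b)ᵀ * Tmat a b)⁻¹ = !![(a^2+b^2)/b, -(a/b); -(a/b), 1/b] := by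
    rw [Matrix.inv_def, keydet a b hb, key a b hb, Matrix.adjugate_fin_two_of]
    norm_num
  rw [hinv, keydet a b hb, keydet α β hβ, key α β hβ]
  simp [Matrix.trace_fin_two, Matrix.mul_apply, Fin.sum_univ_two]
  field_simp
  ring
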